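/- (β-Lagrange identity.) Let s0 ≤ b with b ∈ I, let r : I → ℝ be continuous on [s0,b], and let y, z : I → ℂ belong to L²_β(s0,b), be continuous and differentiable at s0, with D_β y and D_β z differentiable at s0 and D_β y, D_β z, D_{β^{-1}}D_β y, D_{β^{-1}}D_β z bounded on the set {β^k(b) : k ∈ ℕ₀} ∪ {s0}. Then ∫_{s0}^{b} [ (ℓ_β y)(t)·conj(z(t)) − y(t)·conj((ℓ_β z)(t)) ] d_β t = [y, conj z](b) − [y, conj z](s0). -/

import Mathlib

open Function Set ComplexConjugate

/-- The β-derivative `D_β f` of `f : ℝ → ℂ`: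
`(f (β t) - f t) / (β t - t)` for `t ≠ s0`, and `f' s0` at `t = s0`. -/
noncomputable def Dq (β : ℝ → ℝ) (s0 : ℝ) (f : ℝ → ℂ) (t : ℝ) : ℂ :=
  if t = s0 then deriv f s0 else (f (β t) - f t) / ((β t : ℂ) - (t : ℂ))

/-- The β-integral `∫_{s0}^{x} f d_β = ∑_{k} (β^k x - β^{k+1} x) f (β^k x)` (complex-valued). -/
noncomputable def betaInt (β : ℝ → ℝ) (x : ℝ) (f : ℝ → ℂ) : ℂ :=
  ∑' k : ℕ, ((β^[k] x - β^[k + 1] x : ℝ) : ℂ) * f (β^[k] x)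

/-- The β-integral `∫_{s0}^{x} f d_β` for a real-valued integrand. -/
noncomputable def betaIntR (β : ℝ → ℝ) (x : ℝ) (f : ℝ → ℝ) : ℝ :=
  ∑' k : ℕ, (β^[k] x - β^[k + 1] x) * f (β^[k] x)

/-- `∫_a^b f d_β := ∫_{s0}^b f d_β - ∫_{s0}^a f d_β`. -/
noncomputable def betaIntAB (β : ℝ → ℝ) (a b : ℝ) (f : ℝ → ℂ) : ℂ :=
  betaInt β b f - betaInt β a f

/-- `∫_a^b f d_β` for a real-valued integrand. -/
noncomputable def betaIntRAB (β : ℝ → ℝ) (a b : ℝ) (f : ℝ → ℝ) : ℝ :=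
  betaIntR β b f - betaIntR β a f

/-- `D_β β⁻¹`, viewed as a complex-valued function. -/
noncomputable def DbinvC (β βinv : ℝ → ℝ) (s0 : ℝ) : ℝ → ℂ :=
  Dq β s0 fun u => (βinv u : ℂ)

/-- The β-Sturm–Liouville operator
`ℓ_β y (t) = -(D_β β⁻¹)(t) · (D_{β⁻¹} (D_β y))(t) + r t · y t`. -/
noncomputable def ellBeta (β βinv : ℝ → ℝ) (s0 : ℝ) (r : ℝ → ℝ) (y : ℝ → ℂ) (t : ℝ) : ℂ :=
  -(DbinvC β βinv s0 t) * Dq βinv s0 (Dq β s0 y) t + (r t : ℂ) * y t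

/-- The β-Wronskian `[y,z](t) = y t · (D_{β⁻¹} z) t - z t · (D_{β⁻¹} y) t`. -/
noncomputable def wronk (βinv : ℝ → ℝ) (s0 : ℝ) (y z : ℝ → ℂ) (t : ℝ) : ℂ :=
  y t * Dq βinv s0 z t - z t * Dq βinv s0 y t

/-- The β-exponential `e_{p,β}(t) = 1 / ∏_k (1 - p(β^k t)(β^k t - β^{k+1} t))`. -/
noncomputable def ebeta (β : ℝ → ℝ) (p : ℝ → ℂ) (t : ℝ) : ℂ :=
  1 / ∏' k : ℕ, (1 - p (β^[k] t) * ((β^[k] t - β^[k + 1] t : ℝ) : ℂ))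

/-- The β-exponential `E_{p,β}(t) = ∏_k (1 + p(β^k t)(β^k t - β^{k+1} t))`. -/
noncomputable def Ebeta (β : ℝ → ℝ) (p : ℝ → ℂ) (t : ℝ) : ℂ :=
  ∏' k : ℕ, (1 + p (β^[k] t) * ((β^[k] t - β^[k + 1] t : ℝ) : ℂ))

/-- `sin_{p,β}(t) = (e_{ip,β}(t) - e_{-ip,β}(t)) / (2i)`. -/
noncomputable def sinBeta (β : ℝ → ℝ) (p : ℝ → ℂ) (t : ℝ) : ℂ :=
  (ebeta β (fun s => Complex.I * p s) t - ebeta β (fun s => -(Complex.I * p s)) t) /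
    (2 * Complex.I)

/-- `cos_{p,β}(t) = (e_{ip,β}(t) + e_{-ip,β}(t)) / 2`. -/
noncomputable def cosBeta (β : ℝ → ℝ) (p : ℝ → ℂ) (t : ℝ) : ℂ :=
  (ebeta β (fun s => Complex.I * p s) t + ebeta β (fun s => -(Complex.I * p s)) t) / 2


lemma aux_ell (β βinv : ℝ → ℝ) (s0 : ℝ) (r : ℝ → ℝ) (y z : ℝ → ℂ) (a p q : ℝ)
    (hq : β p = q) (hp : β a = p) (ha : βinv p = a) (hpq : βinv q = p)
    (hps : p ≠ s0) (hqs : q ≠ s0) (has : a ≠ s0) (hap : a ≠ p) (hqp : q ≠ p) :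
    ((p - q : ℝ) : ℂ) *
        (ellBeta β βinv s0 r y p * conj (z p) - y p * conj (ellBeta β βinv s0 r z p)) =
      wronk βinv s0 y (fun t => conj (z t)) p - wronk βinv s0 y (fun t => conj (z t)) q := by
  have d1 : (a : ℂ) - p ≠ 0 := sub_ne_zero.mpr (by exact_mod_cast hap)
  have d2 : (q : ℂ) - p ≠ 0 := sub_ne_zero.mpr (by exact_mod_cast hqp)
  have d3 : (p : ℂ) - a ≠ 0 := sub_ne_zero.mpr (by exact_mod_cast (Ne.symm hap))
  have d4 : (p : ℂ) - q ≠ 0 := sub_ne_zero.mpr (by exact_mod_cast (Ne.symm hqp))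
  simp only [ellBeta, DbinvC, wronk, Dq, if_neg hps, if_neg hqs, if_neg has, hq, hp, ha, hpq,
    map_add, map_mul, map_sub, map_div₀, map_neg, Complex.conj_conj, Complex.conj_ofReal]
  push_cast
  field_simp
  ring

lemma aux_bound (β βinv : ℝ → ℝ) (s0 : ℝ) (r : ℝ → ℝ) (y z : ℝ → ℂ) (a p q : ℝ)
    (hq : β p = q) (ha : βinv p = a) (hpq : βinv q = p)
    (hps : p ≠ s0) (hqp : q ≠ p) :
    ((p - q : ℝ) : ℂ) *
        (ellBeta β βinv s0 r y p * conj (z p) - y p * conj (ellBeta β βinv s0 r z p)) =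
      ((p - a : ℝ) : ℂ) * (Dq βinv s0 (Dq β s0 y) p * conj (z p) -
        y p * conj (Dq βinv s0 (Dq β s0 z) p)) := by
  have d2 : (q : ℂ) - p ≠ 0 := sub_ne_zero.mpr (by exact_mod_cast hqp)
  have d4 : (p : ℂ) - q ≠ 0 := sub_ne_zero.mpr (by exact_mod_cast (Ne.symm hqp))
  have hD : DbinvC β βinv s0 p = ((p : ℂ) - a) / ((q : ℂ) - p) := by
    simp only [DbinvC, Dq, if_neg hps, hq, hpq, ha]
  simp only [ellBeta, hD, map_add, map_mul, map_sub, map_div₀, map_neg, Complex.conj_ofReal]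
  push_cast
  field_simp
  ring
theorem stmt_6
    (I : Set ℝ) (hIconn : I.OrdConnected)
    (β βinv : ℝ → ℝ) (s0 : ℝ)
    (hmono : StrictMonoOn β I) (hcont : ContinuousOn β I)
    (hbij : Set.BijOn β I I) (hinv : Set.InvOn βinv β I I)
    (hs0I : s0 ∈ I) (hfix : β s0 = s0)
    (hsign : ∀ t ∈ I, (t - s0) * (β t - t) ≤ 0)
    (huniq : ∀ t ∈ I, (t - s0) * (β t - t) = 0 → t = s0)
    (b : ℝ) (hb : b ∈ I) (hs0b : s0 ≤ b)
    (r : ℝ → ℝ) (hr : ContinuousOn r (Set.Icc s0 b)) (y z : ℝ → ℂ)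
    (hyL2 : Summable fun j : ℕ => (β^[j] b - β^[j + 1] b) * ‖y (β^[j] b)‖ ^ 2)
    (hzL2 : Summable fun j : ℕ => (β^[j] b - β^[j + 1] b) * ‖z (β^[j] b)‖ ^ 2)
    (hyc : ContinuousAt y s0) (hzc : ContinuousAt z s0)
    (hyd : DifferentiableAt ℝ y s0) (hzd : DifferentiableAt ℝ z s0)
    (hDyd : DifferentiableAt ℝ (Dq β s0 y) s0) (hDzd : DifferentiableAt ℝ (Dq β s0 z) s0)
    (hDyb : ∃ C, ∀ t ∈ insert s0 (Set.range fun j : ℕ => β^[j] b), ‖Dq β s0 y t‖ ≤ C)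
    (hDzb : ∃ C, ∀ t ∈ insert s0 (Set.range fun j : ℕ => β^[j] b), ‖Dq β s0 z t‖ ≤ C)
    (hDDyb : ∃ C, ∀ t ∈ insert s0 (Set.range fun j : ℕ => β^[j] b), ‖Dq βinv s0 (Dq β s0 y) t‖ ≤ C)
    (hDDzb : ∃ C, ∀ t ∈ insert s0 (Set.range fun j : ℕ => β^[j] b), ‖Dq βinv s0 (Dq β s0 z) t‖ ≤ C) :
    betaInt β b (fun t =>
        ellBeta β βinv s0 r y t * conj (z t) - y t * conj (ellBeta β βinv s0 r z t)) =
      wronk βinv s0 y (fun t => conj (z t)) b - wronk βinv s0 y (fun t => conj (z t)) s0 := by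
  classical
  set F : ℝ → ℂ := fun t =>
    ellBeta β βinv s0 r y t * conj (z t) - y t * conj (ellBeta β βinv s0 r z t) with hF
  set W : ℝ → ℂ := wronk βinv s0 y (fun t => conj (z t)) with hWdef
  by_cases hbs : b = s0
  · subst hbs
    simp [betaInt, Function.iterate_fixed hfix]
  · have hs0b' : s0 < b := lt_of_le_of_ne hs0b (Ne.symm hbs)
    have hIcc : Set.Icc s0 b ⊆ I := hIconn.out hs0I hb
    set T : ℕ → ℝ := fun k => β^[k] b with hT
    have hT0 : T 0 = b := rfl
    have hTsucc : ∀ k, T (k + 1) = β (T k) := fun k => Function.iterate_succ_apply' β k b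
    have hTI : ∀ k, T k ∈ I := by
      intro k
      induction k with
      | zero => exact hb
      | succ k ih => rw [hTsucc]; exact hbij.mapsTo ih
    have hTs0 : ∀ k, s0 < T k := by
      intro k
      induction k with
      | zero => exact hs0b'
      | succ k ih =>
        have := hmono hs0I (hTI k) ih
        rw [hfix] at this
        rw [hTsucc]; exact this
    have hstep : ∀ k, T (k + 1) < T k := by
      intro k
      have hne : β (T k) ≠ T k := by
        intro h
        exact absurd (huniq _ (hTI k) (by rw [h]; ring)) (hTs0 k).ne'
      have hle : β (T k) ≤ T k := by nlinarith [hsign (T k) (hTI k), hTs0 k]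
      rw [hTsucc]; exact lt_of_le_of_ne hle hne
    have hanti : Antitone T := antitone_nat_of_succ_le fun k => (hstep k).le
    set u : ℕ → ℝ := fun k => βinv (T k) with hu
    have hβu : ∀ k, β (u k) = T k := fun k => hinv.2 (hTI k)
    have hu1 : ∀ k, u (k + 1) = T k := by
      intro k
      show βinv (T (k + 1)) = T k
      rw [hTsucc]; exact hinv.1 (hTI k)
    have hus0 : ∀ k, u k ≠ s0 := by
      intro k h
      have := hβu k
      rw [h, hfix] at this
      exact (hTs0 k).ne' this.symm
    have huT : ∀ k, u k ≠ T k := by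
      intro k h
      have h2 : β (T k) = T k := by conv_lhs => rw [← h, hβu k]
      exact absurd (huniq _ (hTI k) (by rw [h2]; ring)) (hTs0 k).ne'
    -- limit of T
    have hbdd : BddBelow (Set.range T) := by
      refine ⟨s0, ?_⟩
      rintro x ⟨k, rfl⟩
      exact (hTs0 k).le
    have hLtend : Filter.Tendsto T Filter.atTop (nhds (⨅ k, T k)) :=
      tendsto_atTop_ciInf hanti hbdd
    have hs0L : s0 ≤ ⨅ k, T k := le_ciInf fun k => (hTs0 k).le
    have hLb : (⨅ k, T k) ≤ b := by
      have := ciInf_le hbdd 0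
      rwa [hT0] at this
    have hLI : (⨅ k, T k) ∈ I := hIcc ⟨hs0L, hLb⟩
    have hβL : β (⨅ k, T k) = ⨅ k, T k := by
      have h1 : Filter.Tendsto (fun k => β (T k)) Filter.atTop (nhds (β (⨅ k, T k))) := by
        refine (hcont _ hLI).tendsto.comp ?_
        rw [tendsto_nhdsWithin_iff]
        exact ⟨hLtend, Filter.Eventually.of_forall fun k => hTI k⟩
      have h2 : Filter.Tendsto (fun k => β (T k)) Filter.atTop (nhds (⨅ k, T k)) := by
        have he : (fun k => β (T k)) = fun k => T (k + 1) := funext fun k => (hTsucc k).symm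
        rw [he]
        exact hLtend.comp (Filter.tendsto_add_atTop_nat 1)
      exact tendsto_nhds_unique h1 h2
    have hLs0 : (⨅ k, T k) = s0 := huniq _ hLI (by rw [hβL]; ring)
    have hTlim : Filter.Tendsto T Filter.atTop (nhds s0) := hLs0 ▸ hLtend
    have hulim : Filter.Tendsto u Filter.atTop (nhds s0) := by
      refine (Filter.tendsto_add_atTop_iff_nat 1).mp ?_
      simpa only [hu1] using hTlim
    -- W along T and its limit
    have hWt : ∀ k, W (T k) =
        y (T k) * conj (Dq β s0 z (u k)) - conj (z (T k)) * Dq β s0 y (u k) := by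
      intro k
      have h1 : ∀ f : ℝ → ℂ, Dq βinv s0 f (T k) = (f (u k) - f (T k)) / ((u k : ℂ) - T k) := by
        intro f
        rw [Dq, if_neg (hTs0 k).ne']
      have h2 : ∀ f : ℝ → ℂ, Dq β s0 f (u k) = (f (T k) - f (u k)) / ((T k : ℂ) - u k) := by
        intro f
        rw [Dq, if_neg (hus0 k), hβu k]
      have hne : ((u k : ℂ) - T k) ≠ 0 := sub_ne_zero.mpr (by exact_mod_cast huT k)
      have hne2 : ((T k : ℂ) - u k) ≠ 0 := sub_ne_zero.mpr (by
        exact_mod_cast (Ne.symm (huT k)))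
      rw [hWdef, wronk, h1, h1, h2, h2]
      simp only [map_div₀, map_sub, Complex.conj_ofReal]
      field_simp
      ring
    have hWs0 : W s0 = y s0 * conj (Dq β s0 z s0) - conj (z s0) * Dq β s0 y s0 := by
      rw [hWdef, wronk]
      have hd : deriv (fun t => (starRingEnd ℂ) (z t)) s0 = (starRingEnd ℂ) (deriv z s0) := by
        have h := (hzd.hasDerivAt).star.deriv
        simp only [starRingEnd_apply]
        exact h
      have hq2 : ∀ f : ℝ → ℂ, Dq βinv s0 f s0 = deriv f s0 := fun f => if_pos rfl
      have hq3 : ∀ f : ℝ → ℂ, Dq β s0 f s0 = deriv f s0 := fun f => if_pos rfl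
      rw [hq2, hq2, hq3, hq3, hd]
    have hWlim : Filter.Tendsto (fun k => W (T k)) Filter.atTop (nhds (W s0)) := by
      rw [hWs0]
      have h1 : Filter.Tendsto (fun k => y (T k)) Filter.atTop (nhds (y s0)) :=
        hyc.tendsto.comp hTlim
      have h2 : Filter.Tendsto (fun k => Dq β s0 z (u k)) Filter.atTop
          (nhds (Dq β s0 z s0)) := hDzd.continuousAt.tendsto.comp hulim
      have h3 : Filter.Tendsto (fun k => conj (z (T k))) Filter.atTop (nhds (conj (z s0))) :=
        (Complex.continuous_conj.tendsto _).comp (hzc.tendsto.comp hTlim)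
      have h4 : Filter.Tendsto (fun k => Dq β s0 y (u k)) Filter.atTop
          (nhds (Dq β s0 y s0)) := hDyd.continuousAt.tendsto.comp hulim
      have h2' : Filter.Tendsto (fun k => conj (Dq β s0 z (u k))) Filter.atTop
          (nhds (conj (Dq β s0 z s0))) := (Complex.continuous_conj.tendsto _).comp h2
      have := (h1.mul h2').sub (h3.mul h4)
      exact this.congr fun k => (hWt k).symm
    -- bounds along the orbit
    obtain ⟨Cy, hCy⟩ := hDyb
    obtain ⟨Cz, hCz⟩ := hDzb
    obtain ⟨Cyy, hCyy⟩ := hDDyb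
    obtain ⟨Czz, hCzz⟩ := hDDzb
    have hmemT : ∀ k, T k ∈ insert s0 (Set.range T) :=
      fun k => Set.mem_insert_of_mem _ ⟨k, rfl⟩
    have hCy0 : 0 ≤ Cy := (norm_nonneg _).trans (hCy (T 0) (hmemT 0))
    have hCz0 : 0 ≤ Cz := (norm_nonneg _).trans (hCz (T 0) (hmemT 0))
    have hCyy0 : 0 ≤ Cyy := (norm_nonneg _).trans (hCyy (T 0) (hmemT 0))
    have hCzz0 : 0 ≤ Czz := (norm_nonneg _).trans (hCzz (T 0) (hmemT 0))
    have hnormd : ∀ k, ‖((T (k + 1) : ℂ)) - (T k : ℂ)‖ = T k - T (k + 1) := by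
      intro k
      rw [show ((T (k + 1) : ℂ)) - (T k : ℂ) = (((T (k + 1) - T k : ℝ)) : ℂ) by push_cast; ring,
        Complex.norm_real, Real.norm_eq_abs, abs_of_nonpos (by linarith [hstep k])]
      ring
    have horbit : ∀ (f : ℝ → ℂ) (Cf : ℝ), (0 ≤ Cf) →
        (∀ t ∈ insert s0 (Set.range T), ‖Dq β s0 f t‖ ≤ Cf) →
        ∀ k, ‖f (T k)‖ ≤ ‖f b‖ + (b - s0) * Cf := by
      intro f Cf hCf0 hCf k
      have key : ∀ k, ‖f (T k)‖ ≤ ‖f b‖ + (b - T k) * Cf := by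
        intro k
        induction k with
        | zero => simp [hT0]
        | succ k ih =>
          have hne : ((T (k + 1) : ℂ)) - (T k : ℂ) ≠ 0 :=
            sub_ne_zero.mpr (by exact_mod_cast (hstep k).ne)
          have hDq : Dq β s0 f (T k) =
              (f (T (k + 1)) - f (T k)) / (((T (k + 1) : ℂ)) - (T k : ℂ)) := by
            rw [Dq, if_neg (hTs0 k).ne', ← hTsucc k]
          have h5 : f (T (k + 1)) = f (T k) +
              (((T (k + 1) : ℂ)) - (T k : ℂ)) * Dq β s0 f (T k) := by
            rw [hDq, mul_div_cancel₀ _ hne]; ring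
          have h6 : ‖f (T (k + 1))‖ ≤ ‖f (T k)‖ + (T k - T (k + 1)) * Cf := by
            rw [h5]
            refine (norm_add_le _ _).trans ?_
            rw [norm_mul, hnormd k]
            have := mul_le_mul_of_nonneg_left (hCf (T k) (hmemT k))
              (by linarith [hstep k] : (0 : ℝ) ≤ T k - T (k + 1))
            linarith
          have h7 : T (k + 1) ≤ b := by
            have := hanti (Nat.zero_le (k + 1))
            rwa [hT0] at this
          nlinarith [hstep k]
      have h8 := key k
      have h9 : b - T k ≤ b - s0 := by linarith [hTs0 k]
      nlinarith
    set My : ℝ := ‖y b‖ + (b - s0) * Cy with hMy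
    set Mz : ℝ := ‖z b‖ + (b - s0) * Cz with hMz
    have hyb : ∀ k, ‖y (T k)‖ ≤ My := horbit y Cy hCy0 hCy
    have hzb : ∀ k, ‖z (T k)‖ ≤ Mz := horbit z Cz hCz0 hCz
    have hMy0 : 0 ≤ My := (norm_nonneg _).trans (hyb 0)
    have hMz0 : 0 ≤ Mz := (norm_nonneg _).trans (hzb 0)
    set K : ℝ := Cyy * Mz + My * Czz with hK
    -- summability of gaps
    have hwsum : Summable (fun k => T k - T (k + 1)) := by
      refine summable_of_sum_range_le (c := b - s0) (fun k => by linarith [hstep k]) ?_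
      intro n
      rw [Finset.sum_range_sub' T n, hT0]
      linarith [hTs0 n]
    set g : ℕ → ℂ := fun k => ((T k - T (k + 1) : ℝ) : ℂ) * F (T k) with hg
    have htel : ∀ k, g k = W (T k) - W (T (k + 1)) := by
      intro k
      exact aux_ell β βinv s0 r y z (u k) (T k) (T (k + 1)) (hTsucc k).symm (hβu k) rfl
        (hu1 k) (hTs0 k).ne' (hTs0 (k + 1)).ne' (hus0 k) (huT k) (hstep k).ne
    have hbound : ∀ k, ‖g (k + 1)‖ ≤ (T k - T (k + 1)) * K := by
      intro k
      have h1 := aux_bound β βinv s0 r y z (u (k + 1)) (T (k + 1)) (T (k + 2))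
        (hTsucc (k + 1)).symm rfl (hu1 (k + 1)) (hTs0 (k + 1)).ne' (hstep (k + 1)).ne
      have h2 : g (k + 1) = ((T (k + 1) - T k : ℝ) : ℂ) *
          (Dq βinv s0 (Dq β s0 y) (T (k + 1)) * conj (z (T (k + 1))) -
            y (T (k + 1)) * conj (Dq βinv s0 (Dq β s0 z) (T (k + 1)))) := by
        rw [hg]
        simp only []
        rw [h1, hu1 k]
      rw [h2, norm_mul]
      have h3 : ‖((T (k + 1) - T k : ℝ) : ℂ)‖ = T k - T (k + 1) := by
        rw [Complex.norm_real, Real.norm_eq_abs, abs_of_nonpos (by linarith [hstep k])]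
        ring
      rw [h3]
      refine mul_le_mul_of_nonneg_left ?_ (by linarith [hstep k])
      refine (norm_sub_le _ _).trans ?_
      rw [norm_mul, norm_mul, RCLike.norm_conj, RCLike.norm_conj, hK]
      have b1 : ‖Dq βinv s0 (Dq β s0 y) (T (k + 1))‖ * ‖z (T (k + 1))‖ ≤ Cyy * Mz :=
        mul_le_mul (hCyy _ (hmemT (k + 1))) (hzb (k + 1)) (norm_nonneg _) hCyy0
      have b2 : ‖y (T (k + 1))‖ * ‖Dq βinv s0 (Dq β s0 z) (T (k + 1))‖ ≤ My * Czz :=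
        mul_le_mul (hyb (k + 1)) (hCzz _ (hmemT (k + 1))) (norm_nonneg _) hMy0
      linarith
    have hgsum : Summable g := by
      refine (summable_nat_add_iff 1).mp ?_
      exact Summable.of_norm_bounded ((hwsum.mul_right K)) hbound
    have hpartial : ∀ n, ∑ k ∈ Finset.range n, g k = W (T 0) - W (T n) := by
      intro n
      simp only [htel]
      exact Finset.sum_range_sub' (fun k => W (T k)) n
    have hpart : Filter.Tendsto (fun n => ∑ k ∈ Finset.range n, g k) Filter.atTop
        (nhds (W b - W s0)) := by
      simp only [hpartial, hT0]
      exact tendsto_const_nhds.sub hWlim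
    have hfin : ∑' k, g k = W b - W s0 :=
      tendsto_nhds_unique hgsum.hasSum.tendsto_sum_nat hpart
    rw [betaInt]
    exact hfin
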